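/- arXiv:1008.2878 — 5 statements merged into one kernel-verified Lean document; each statement's English description precedes it below -/
import Mathlib

section
/- Let H be a Hilbert space, S, S_k bounded operators with ‖S_k‖ ≤ 1, S_k → S in the weak operator topology, and x ∈ H. Suppose N ∈ ℕ and ‖S^(l+1) x‖ = ‖S^l x‖ for all l < N. Then ‖S_k^N x − S^N x‖ → 0 as k → ∞. -/
open Filter

private lemma key_strong {H : Type*} [NormedAddCommGroup H] [InnerProductSpace ℂ H]
    (S : H →L[ℂ] H) (Sk : ℕ → H →L[ℂ] H) (hSk : ∀ k, ‖Sk k‖ ≤ 1)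
    (hconv : ∀ x y : H, Filter.Tendsto (fun k => (inner ℂ ((Sk k) x) y : ℂ))
      Filter.atTop (nhds (inner ℂ (S x) y)))
    (y : H) (hy : ‖S y‖ = ‖y‖) :
    Tendsto (fun k => ‖Sk k y - S y‖) atTop (nhds 0) := by
  have hsq : Tendsto (fun k => ‖Sk k y - S y‖ ^ 2) atTop (nhds 0) := by
    have hre : Tendsto (fun k => (Complex.re (inner ℂ ((Sk k) y) (S y) : ℂ)))
        atTop (nhds (Complex.re (inner ℂ (S y) (S y) : ℂ))) :=
      (Complex.continuous_re.tendsto _).comp (hconv y (S y))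
    have hinner : Complex.re (inner ℂ (S y) (S y) : ℂ) = ‖S y‖ ^ 2 :=
      inner_self_eq_norm_sq (𝕜 := ℂ) (S y)
    have hub : Tendsto (fun k => 2 * ‖S y‖ ^ 2 - 2 * Complex.re (inner ℂ ((Sk k) y) (S y) : ℂ))
        atTop (nhds 0) := by
      have := (tendsto_const_nhds (x := (2 * ‖S y‖ ^ 2 : ℝ))).sub
        (hre.const_mul 2)
      rw [hinner] at this
      simpa using this
    apply squeeze_zero (fun k => by positivity) _ hub
    intro k
    have hexp : ‖Sk k y - S y‖ ^ 2
        = ‖Sk k y‖ ^ 2 - 2 * Complex.re (inner ℂ ((Sk k) y) (S y) : ℂ) + ‖S y‖ ^ 2 :=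
      norm_sub_sq (𝕜 := ℂ) _ _
    have hb : ‖Sk k y‖ ≤ ‖S y‖ := by
      rw [hy]
      calc ‖Sk k y‖ ≤ ‖Sk k‖ * ‖y‖ := (Sk k).le_opNorm y
        _ ≤ 1 * ‖y‖ := by gcongr; exact hSk k
        _ = ‖y‖ := one_mul _
    have hb2 : ‖Sk k y‖ ^ 2 ≤ ‖S y‖ ^ 2 := by
      gcongr
    rw [hexp]; nlinarith
  have : Tendsto (fun k => Real.sqrt (‖Sk k y - S y‖ ^ 2)) atTop (nhds (Real.sqrt 0)) :=
    (Real.continuous_sqrt.tendsto _).comp hsq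
  simpa [Real.sqrt_sq (norm_nonneg _)] using this

/-- If contractions `S_k` converge weakly (WOT) to `S` and the norms are preserved along the
first `N` steps of the orbit of `x` under `S`, then `S_k^N x → S^N x` in norm. -/
theorem stmt2 {H : Type*} [NormedAddCommGroup H] [InnerProductSpace ℂ H] [CompleteSpace H]
    (S : H →L[ℂ] H) (Sk : ℕ → H →L[ℂ] H) (hSk : ∀ k, ‖Sk k‖ ≤ 1)
    (hconv : ∀ x y : H, Filter.Tendsto (fun k => (inner ℂ ((Sk k) x) y : ℂ))
      Filter.atTop (nhds (inner ℂ (S x) y)))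
    (x : H) (N : ℕ) (hnorm : ∀ l < N, ‖(S ^ (l + 1)) x‖ = ‖(S ^ l) x‖) :
    Filter.Tendsto (fun k => ‖(Sk k ^ N) x - (S ^ N) x‖) Filter.atTop (nhds 0) := by
  induction N with
  | zero => simp
  | succ l ih =>
    have ih' := ih (fun m hm => hnorm m (Nat.lt_succ_of_lt hm))
    set y := (S ^ l) x with hy
    have hkey : Tendsto (fun k => ‖Sk k y - S y‖) atTop (nhds 0) := by
      apply key_strong S Sk hSk hconv
      have := hnorm l (Nat.lt_succ_self l)
      rw [pow_succ'] at this
      simpa [hy] using this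
    have hub : Tendsto (fun k => ‖(Sk k ^ l) x - (S ^ l) x‖ + ‖Sk k y - S y‖)
        atTop (nhds 0) := by simpa [hy] using ih'.add hkey
    apply squeeze_zero (fun k => norm_nonneg _) _ hub
    intro k
    have h1 : (Sk k ^ (l + 1)) x - (S ^ (l + 1)) x
        = Sk k ((Sk k ^ l) x - (S ^ l) x) + (Sk k y - S y) := by
      rw [pow_succ', pow_succ']
      simp [ContinuousLinearMap.mul_apply, map_sub, hy]

    rw [h1]
    calc ‖Sk k ((Sk k ^ l) x - (S ^ l) x) + (Sk k y - S y)‖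
        ≤ ‖Sk k ((Sk k ^ l) x - (S ^ l) x)‖ + ‖Sk k y - S y‖ := norm_add_le _ _
      _ ≤ ‖(Sk k ^ l) x - (S ^ l) x‖ + ‖Sk k y - S y‖ := by
          gcongr
          calc ‖Sk k ((Sk k ^ l) x - (S ^ l) x)‖ ≤ ‖Sk k‖ * ‖(Sk k ^ l) x - (S ^ l) x‖ :=
                (Sk k).le_opNorm _
            _ ≤ 1 * ‖(Sk k ^ l) x - (S ^ l) x‖ := by gcongr; exact hSk k
            _ = _ := one_mul _
end

section
/- Let X be an infinite-dimensional Banach space, T a contraction on X (‖T‖ ≤ 1), x ∈ X nonzero, and ε > 0. Then there exists a contraction S on X with ‖T − S‖ < ε such that the orbit vectors x, Sx, S²x, … are linearly independent. -/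
open Polynomial Finset

section Aux

variable {X : Type*} [NormedAddCommGroup X] [NormedSpace ℂ X]


/-- Hahn–Banach: a continuous functional equal to 1 at `y` and vanishing on a
finite-dimensional subspace not containing `y`. -/
lemma aux_dual (U : Submodule ℂ X) (hU : FiniteDimensional ℂ U) {y : X} (hy : y ∉ U) :
    ∃ f : X →L[ℂ] ℂ, f y = 1 ∧ ∀ u ∈ U, f u = 0 := by
  obtain ⟨φ, hφy, hφU⟩ := U.exists_dual_map_eq_bot_of_notMem hy inferInstance
  have hφU' : ∀ u ∈ U, φ u = 0 := by
    intro u hu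
    have : φ u ∈ U.map φ := Submodule.mem_map_of_mem hu
    rwa [hφU, Submodule.mem_bot] at this
  set W : Submodule ℂ X := U ⊔ Submodule.span ℂ {y} with hW
  haveI : FiniteDimensional ℂ W := by
    apply Submodule.finiteDimensional_sup
  set ψ : W →ₗ[ℂ] ℂ := ((φ y)⁻¹ • φ).comp W.subtype with hψ
  have hψc : ∃ g : X →L[ℂ] ℂ, ∀ w : W, g w = ψ w := by
    obtain ⟨g, hg, _⟩ := exists_extension_norm_eq W (LinearMap.toContinuousLinearMap ψ)
    exact ⟨g, fun w => by simpa using hg w⟩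
  obtain ⟨g, hg⟩ := hψc
  have hyW : y ∈ W := le_sup_right (α := Submodule ℂ X) (Submodule.mem_span_singleton_self y)
  refine ⟨g, ?_, ?_⟩
  · have := hg ⟨y, hyW⟩
    simp [hψ] at this
    rw [this, inv_mul_cancel₀ hφy]
  · intro u hu
    have huW : u ∈ W := le_sup_left (α := Submodule ℂ X) hu
    have := hg ⟨u, huW⟩
    simp [hψ] at this
    rw [this, hφU' u hu, mul_zero]

lemma aux_exists_new (hX : ¬ FiniteDimensional ℂ X) (v : Set X) (hv : v.Finite) :
    ∃ y : X, y ∉ Submodule.span ℂ v := by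
  by_contra h
  push_neg at h
  have htop : Submodule.span ℂ v = ⊤ := by
    rw [eq_top_iff]; intro z _; exact h z
  exact hX (Module.finite_def.2 (Submodule.fg_def.2 ⟨v, hv, htop⟩))

/-- A sequence starting at `x` such that each term is outside the span of the previous ones. -/
noncomputable def eseq (hX : ¬ FiniteDimensional ℂ X) (x : X) : ℕ → X
  | 0 => x
  | n + 1 => Classical.choose
      (aux_exists_new hX (Set.range (fun k : Fin (n+1) => eseq hX x k.1))
        (Set.finite_range _))

lemma eseq_zero (hX : ¬ FiniteDimensional ℂ X) (x : X) : eseq hX x 0 = x := by rw [eseq]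

lemma eseq_succ_notMem (hX : ¬ FiniteDimensional ℂ X) (x : X) (n : ℕ) :
    eseq hX x (n+1) ∉ Submodule.span ℂ (Set.range (fun k : Fin (n+1) => eseq hX x k.1)) := by
  rw [eseq]
  exact Classical.choose_spec
    (aux_exists_new hX (Set.range (fun k : Fin (n+1) => eseq hX x k.1)) (Set.finite_range _))

lemma eseq_notMem_span_lt (hX : ¬ FiniteDimensional ℂ X) {x : X} (hx : x ≠ 0) (n : ℕ) :
    eseq hX x n ∉ Submodule.span ℂ {y | ∃ m < n, eseq hX x m = y} := by
  cases n with
  | zero =>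
      have : {y | ∃ m < 0, eseq hX x m = y} = (∅ : Set X) := by
        ext y; simp
      rw [this, Submodule.span_empty, Submodule.mem_bot, eseq_zero]
      exact hx
  | succ n =>
      have hset : {y | ∃ m < n+1, eseq hX x m = y}
          = Set.range (fun k : Fin (n+1) => eseq hX x k.1) := by
        ext y
        constructor
        · rintro ⟨m, hm, rfl⟩; exact ⟨⟨m, hm⟩, rfl⟩
        · rintro ⟨⟨m, hm⟩, rfl⟩; exact ⟨m, hm, rfl⟩
      rw [hset]
      exact eseq_succ_notMem hX x n

/-- coefficient vectors of `(A + t B)^j x` as a polynomial in `t`. -/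
noncomputable def vcoef (A B : X →L[ℂ] X) (x : X) : ℕ → ℕ → X
  | 0 => fun k => if k = 0 then x else 0
  | j + 1 => fun k => A (vcoef A B x j k) +
      (match k with
       | 0 => 0
       | k' + 1 => B (vcoef A B x j k'))

lemma vcoef_zero_of_gt (A B : X →L[ℂ] X) (x : X) :
    ∀ j k, j < k → vcoef A B x j k = 0 := by
  intro j
  induction j with
  | zero => intro k hk; simp only [vcoef, if_neg (by omega : ¬ k = 0)]
  | succ j ih =>
      intro k hk
      match k, hk with
      | k' + 1, hk =>
        simp only [vcoef]
        rw [ih (k'+1) (by omega), ih k' (by omega)]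
        simp

lemma vcoef_diag (A B : X →L[ℂ] X) (x : X) :
    ∀ j, vcoef A B x j j = (B ^ j) x := by
  intro j
  induction j with
  | zero => simp [vcoef]
  | succ j ih =>
      simp only [vcoef]
      rw [vcoef_zero_of_gt A B x j (j+1) (by omega), ih, pow_succ',
        ContinuousLinearMap.mul_apply]
      simp

lemma expand_pow (A B : X →L[ℂ] X) (x : X) (t : ℂ) :
    ∀ j, ((A + t • B) ^ j) x = ∑ k ∈ range (j+1), t ^ k • vcoef A B x j k := by
  intro j
  induction j with
  | zero => simp [vcoef]
  | succ j ih =>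
      rw [pow_succ', ContinuousLinearMap.mul_apply, ih,
        ContinuousLinearMap.add_apply, ContinuousLinearMap.smul_apply,
        map_sum, map_sum, smul_sum]
      have hrhs : ∑ k ∈ range (j+2), t ^ k • vcoef A B x (j+1) k
          = ∑ k ∈ range (j+2), (t ^ k • A (vcoef A B x j k) +
              t ^ k • (match k with | 0 => (0:X) | k'+1 => B (vcoef A B x j k'))) := by
        refine Finset.sum_congr rfl fun k _ => ?_
        simp only [vcoef, smul_add]
      rw [hrhs, Finset.sum_add_distrib]
      congr 1
      · symm
        rw [Finset.sum_range_succ, vcoef_zero_of_gt A B x j (j+1) (by omega)]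
        simp [map_smul]
      · symm
        rw [Finset.sum_range_succ']
        simp only [map_smul, smul_smul, pow_succ, pow_zero]
        simp [mul_comm]

end Aux

section AuxR
variable {R : Type*} [CommRing R]

lemma aux_coeff_prod {ι : Type*} (s : Finset ι) (f : ι → Polynomial R) (d : ι → ℕ)
    (h : ∀ i ∈ s, (f i).natDegree ≤ d i) :
    (∏ i ∈ s, f i).coeff (∑ i ∈ s, d i) = ∏ i ∈ s, (f i).coeff (d i) := by
  induction s using Finset.cons_induction with
  | empty => simp
  | cons a s ha ih =>
      rw [Finset.prod_cons, Finset.sum_cons,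
        coeff_mul_add_eq_of_natDegree_le (h a (Finset.mem_cons_self a s))
          ((natDegree_prod_le s f).trans
            (Finset.sum_le_sum fun i hi => h i (Finset.mem_cons_of_mem hi))),
        ih (fun i hi => h i (Finset.mem_cons_of_mem hi)), Finset.prod_cons]

lemma aux_coeff_det (n : ℕ) (M : Matrix (Fin n) (Fin n) (Polynomial R)) (d : Fin n → ℕ)
    (h : ∀ i j, (M i j).natDegree ≤ d j) :
    (M.det).coeff (∑ j, d j) = Matrix.det (Matrix.of fun i j => (M i j).coeff (d j)) := by
  rw [Matrix.det_apply, Matrix.det_apply, Polynomial.finset_sum_coeff]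
  refine Finset.sum_congr rfl fun σ _ => ?_
  have hs : ∀ (p : Polynomial R) (m : ℕ),
      (Equiv.Perm.sign σ • p).coeff m = Equiv.Perm.sign σ • (p.coeff m) := by
    intro p m
    rcases Int.units_eq_one_or (Equiv.Perm.sign σ) with h1 | h1 <;> simp [h1]
  rw [hs]
  congr 1
  simpa using aux_coeff_prod Finset.univ (fun j => M (σ j) j) d (fun j _ => h (σ j) j)

end AuxR

set_option maxHeartbeats 2000000 in
/-- Every contraction on an infinite-dimensional Banach space can be approximated in norm
by a contraction under which the orbit of a prescribed nonzero vector is linearly independent. -/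
theorem stmt3 {X : Type*} [NormedAddCommGroup X] [NormedSpace ℂ X] [CompleteSpace X]
    (hX : ¬ FiniteDimensional ℂ X) (T : X →L[ℂ] X) (hT : ‖T‖ ≤ 1)
    (x : X) (hx : x ≠ 0) (ε : ℝ) (hε : 0 < ε) :
    ∃ S : X →L[ℂ] X, ‖S‖ ≤ 1 ∧ ‖T - S‖ < ε ∧
      LinearIndependent ℂ (fun n : ℕ => (S ^ n) x) := by
  classical
  set δ : ℝ := min (ε/3) (1/2) with hδdef
  have hδpos : 0 < δ := lt_min (by linarith) (by norm_num)
  have hδhalf : δ ≤ 1/2 := min_le_right _ _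
  have hδε : δ ≤ ε/3 := min_le_left _ _
  -- the linearly independent sequence
  set e : ℕ → X := eseq hX x with he
  have he0 : e 0 = x := eseq_zero hX x
  have heN : ∀ n, e n ∉ Submodule.span ℂ {y | ∃ m < n, e m = y} :=
    fun n => eseq_notMem_span_lt hX hx n
  -- finiteness of generating sets
  have hfin : ∀ n : ℕ, ({y | ∃ m < n, e m = y} : Set X).Finite := by
    intro n
    have : {y | ∃ m < n, e m = y} ⊆ e '' (Set.Iio n) := by
      rintro y ⟨m, hm, rfl⟩; exact ⟨m, hm, rfl⟩
    exact Set.Finite.subset ((Set.finite_Iio n).image e) this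
  -- biorthogonal-type functionals
  have hfex : ∀ n : ℕ, ∃ f : X →L[ℂ] ℂ, f (e n) = 1 ∧ ∀ m < n, f (e m) = 0 := by
    intro n
    obtain ⟨f, h1, h2⟩ := aux_dual (Submodule.span ℂ {y | ∃ m < n, e m = y})
      (Module.Finite.span_of_finite ℂ (hfin n)) (heN n)
    exact ⟨f, h1, fun m hm => h2 _ (Submodule.subset_span ⟨m, hm, rfl⟩)⟩
  choose f hf1 hf0 using hfex
  -- small coefficients
  set c : ℕ → ℝ := fun k => (1/2)^(k+1) / ((‖f k‖+1) * (‖e (k+1)‖+1)) with hc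
  have hcpos : ∀ k, 0 < c k := by
    intro k
    apply div_pos (by positivity)
    have : (0:ℝ) < ‖f k‖ + 1 := by positivity
    positivity
  -- rank-one operators
  set b : ℕ → X →L[ℂ] X := fun k => ((c k : ℝ) : ℂ) • (f k).smulRight (e (k+1)) with hb
  have hbnorm : ∀ k, ‖b k‖ ≤ (1/2)^(k+1) := by
    intro k
    have h1 : ‖b k‖ ≤ c k * (‖f k‖ * ‖e (k+1)‖) := by
      simp only [hb]
      refine (norm_smul_le ((c k : ℝ) : ℂ) ((f k).smulRight (e (k+1)))).trans_eq ?_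
      rw [ContinuousLinearMap.norm_smulRight_apply, Complex.norm_real,
        Real.norm_eq_abs, abs_of_pos (hcpos k)]
    refine h1.trans ?_
    simp only [hc]
    rw [div_mul_eq_mul_div, div_le_iff₀ (by positivity)]
    have h2 : ‖f k‖ * ‖e (k+1)‖ ≤ (‖f k‖+1) * (‖e (k+1)‖+1) := by
      have := norm_nonneg (f k); have := norm_nonneg (e (k+1)); nlinarith
    have h3 : (0:ℝ) ≤ (1/2:ℝ)^(k+1) := by positivity
    nlinarith
  -- summability
  have hgeo : Summable (fun k : ℕ => (1/2:ℝ)^(k+1)) := by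
    have := (summable_geometric_of_lt_one (by norm_num : (0:ℝ) ≤ 1/2)
      (by norm_num : (1/2:ℝ) < 1))
    exact this.mul_left (1/2) |>.congr (fun k => by rw [pow_succ, mul_comm])
  have hsum : Summable b := by
    apply Summable.of_norm_bounded hgeo hbnorm
  set B : X →L[ℂ] X := ∑' k, b k with hB
  have hsumn : Summable (fun k => ‖b k‖) :=
    Summable.of_nonneg_of_le (fun k => norm_nonneg _) hbnorm hgeo
  have hBnorm : ‖B‖ ≤ 1 := by
    refine (norm_tsum_le_tsum_norm hsumn).trans ?_
    have h1 : ∑' k, ‖b k‖ ≤ ∑' k : ℕ, (1/2:ℝ)^(k+1) :=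
      Summable.tsum_le_tsum hbnorm hsumn hgeo
    refine h1.trans ?_
    have h2 : ∑' k : ℕ, (1/2:ℝ)^(k+1) = (1/2) * ∑' k : ℕ, (1/2:ℝ)^k := by
      rw [← tsum_mul_left]
      exact tsum_congr fun k => by rw [pow_succ, mul_comm]
    rw [h2, tsum_geometric_of_lt_one (by norm_num) (by norm_num)]
    norm_num
  -- pointwise action of B
  have hBapply : ∀ w : X, B w = ∑' k, (((c k : ℝ) : ℂ) * f k w) • e (k+1) := by
    intro w
    have h1 : B w = (ContinuousLinearMap.apply ℂ X w) B := rfl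
    rw [h1, hB, ContinuousLinearMap.map_tsum _ hsum]
    refine tsum_congr fun k => ?_
    simp only [ContinuousLinearMap.apply_apply, hb]
    simp [ContinuousLinearMap.smulRight_apply, smul_smul]
    rw [mul_smul, Complex.coe_smul]
  have hBe : ∀ m, B (e m) = ∑ k ∈ range (m+1), (((c k : ℝ) : ℂ) * f k (e m)) • e (k+1) := by
    intro m
    rw [hBapply]
    apply tsum_eq_sum
    intro k hk
    have : m < k := by simpa using hk
    rw [hf0 k m this]
    simp
  -- the flag of subspaces
  set V : ℕ → Submodule ℂ X := fun n => Submodule.span ℂ {y | ∃ m < n, e m = y} with hV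
  have hVmono : ∀ {a b : ℕ}, a ≤ b → V a ≤ V b := by
    intro a b hab
    apply Submodule.span_mono
    rintro y ⟨m, hm, rfl⟩; exact ⟨m, lt_of_lt_of_le hm hab, rfl⟩
  have heV : ∀ {m n : ℕ}, m < n → e m ∈ V n := by
    intro m n hmn
    exact Submodule.subset_span ⟨m, hmn, rfl⟩
  have hfV : ∀ (i j : ℕ), j ≤ i → ∀ w ∈ V j, f i w = 0 := by
    intro i j hji w hw
    have hle : V j ≤ LinearMap.ker (f i).toLinearMap := by
      rw [hV, Submodule.span_le]
      rintro y ⟨m, hm, rfl⟩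
      simpa [LinearMap.mem_ker] using hf0 i m (lt_of_lt_of_le hm hji)
    simpa [LinearMap.mem_ker] using hle hw
  have hBe' : ∀ m, B (e m) - (((c m : ℝ) : ℂ)) • e (m+1) ∈ V (m+1) := by
    intro m
    rw [hBe m, Finset.sum_range_succ, hf1 m, mul_one]
    have : ∑ k ∈ range m, (((c k : ℝ) : ℂ) * f k (e m)) • e (k+1) + ((c m : ℝ) : ℂ) • e (m+1)
        - ((c m : ℝ) : ℂ) • e (m+1) = ∑ k ∈ range m, (((c k : ℝ) : ℂ) * f k (e m)) • e (k+1) := by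
      abel
    rw [this]
    apply Submodule.sum_mem
    intro k hk
    have hk' : k < m := Finset.mem_range.mp hk
    exact Submodule.smul_mem _ _ (heV (by omega))
  have hBV : ∀ n, ∀ w ∈ V n, B w ∈ V (n+1) := by
    intro n w hw
    induction hw using Submodule.span_induction with
    | mem y hy =>
        obtain ⟨m, hm, rfl⟩ := hy
        have h1 := hBe' m
        have h2 : B (e m) = (B (e m) - ((c m : ℝ) : ℂ) • e (m+1)) + ((c m : ℝ) : ℂ) • e (m+1) := by
          abel
        rw [h2]
        exact Submodule.add_mem _ (hVmono (by omega) h1)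
          (Submodule.smul_mem _ _ (heV (by omega)))
    | zero => simpa using Submodule.zero_mem _
    | add u v _ _ hu hv => rw [map_add]; exact Submodule.add_mem _ hu hv
    | smul a u _ hu => rw [map_smul]; exact Submodule.smul_mem _ _ hu
  -- the product coefficients
  set γ : ℕ → ℂ := fun j => ∏ l ∈ range j, ((c l : ℝ) : ℂ) with hγdef
  have hγ : ∀ j, γ j ≠ 0 := by
    intro j
    apply Finset.prod_ne_zero_iff.2
    intro l _
    simpa using (hcpos l).ne'
  have hγsucc : ∀ j, γ (j+1) = γ j * ((c j : ℝ) : ℂ) := by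
    intro j; rw [hγdef]; exact Finset.prod_range_succ _ j
  -- B^j x lies in the flag up to the leading term
  have hBj : ∀ j, (B^j) x - γ j • e j ∈ V j := by
    intro j
    induction j with
    | zero =>
        have : (B^0) x - γ 0 • e 0 = 0 := by
          simp [hγdef, he0]
        rw [this]; exact Submodule.zero_mem _
    | succ j ih =>
        have hstep : (B^(j+1)) x = B ((B^j) x) := by
          rw [pow_succ', ContinuousLinearMap.mul_apply]
        have hdecomp : (B^(j+1)) x - γ (j+1) • e (j+1)
            = γ j • (B (e j) - ((c j : ℝ) : ℂ) • e (j+1)) + B ((B^j) x - γ j • e j) := by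
          rw [hstep, hγsucc j]
          rw [map_sub, map_smul, smul_sub, smul_smul]
          abel
        rw [hdecomp]
        exact Submodule.add_mem _ (Submodule.smul_mem _ _ (hBe' j)) (hBV j _ ih)
  -- triangularity data
  have hN0 : ∀ i j : ℕ, j < i → f i ((B^j) x) = 0 := by
    intro i j hji
    have h1 : (B^j) x = ((B^j) x - γ j • e j) + γ j • e j := by abel
    rw [h1, map_add, map_smul, hfV i j (by omega) _ (hBj j), hf0 i j hji]
    simp
  have hNd : ∀ j, f j ((B^j) x) = γ j := by
    intro j
    have h1 : (B^j) x = ((B^j) x - γ j • e j) + γ j • e j := by abel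
    rw [h1, map_add, map_smul, hfV j j le_rfl _ (hBj j), hf1 j]
    simp
  -- the shrunk operator
  set A : X →L[ℂ] X := (((1-δ : ℝ) : ℂ)) • T with hA
  -- the polynomial matrices
  set Mp : (n : ℕ) → Matrix (Fin (n+1)) (Fin (n+1)) (Polynomial ℂ) := fun n =>
    Matrix.of fun i j => ∑ k ∈ range ((j:ℕ)+1),
      Polynomial.C (f i (vcoef A B x (j:ℕ) k)) * Polynomial.X ^ k with hMp
  have hdeg : ∀ (n : ℕ) (i j : Fin (n+1)), (Mp n i j).natDegree ≤ (j:ℕ) := by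
    intro n i j
    simp only [hMp, Matrix.of_apply]
    apply Polynomial.natDegree_sum_le_of_forall_le
    intro k hk
    refine Polynomial.natDegree_mul_le.trans ?_
    rw [Polynomial.natDegree_C, Polynomial.natDegree_X_pow]
    have := Finset.mem_range.mp hk
    omega
  have hcoeff : ∀ (n : ℕ) (i j : Fin (n+1)), (Mp n i j).coeff (j:ℕ) = f i ((B^(j:ℕ)) x) := by
    intro n i j
    simp only [hMp, Matrix.of_apply, Polynomial.finset_sum_coeff, Polynomial.coeff_C_mul,
      Polynomial.coeff_X_pow]
    rw [Finset.sum_eq_single (j:ℕ)]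
    · rw [vcoef_diag]; simp
    · intro k _ hkj
      simp [Ne.symm hkj]
    · intro h
      exact absurd (Finset.self_mem_range_succ (j:ℕ)) h
  have heval : ∀ (t : ℂ) (n : ℕ) (i j : Fin (n+1)),
      (Mp n i j).eval t = f i (((A + t • B)^(j:ℕ)) x) := by
    intro t n i j
    rw [expand_pow A B x t (j:ℕ)]
    simp only [hMp, Matrix.of_apply, Polynomial.eval_finset_sum, Polynomial.eval_mul,
      Polynomial.eval_pow, Polynomial.eval_C, Polynomial.eval_X, map_sum, map_smul,
      smul_eq_mul]
    exact Finset.sum_congr rfl fun k _ => mul_comm _ _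
  have hD0 : ∀ n : ℕ, (Mp n).det ≠ 0 := by
    intro n
    have h1 := aux_coeff_det (n+1) (Mp n) (fun j => (j:ℕ)) (hdeg n)
    have h2 : (Matrix.of fun i j : Fin (n+1) => (Mp n i j).coeff (j:ℕ))
        = Matrix.of fun i j : Fin (n+1) => f i ((B^(j:ℕ)) x) := by
      ext i j; exact hcoeff n i j
    have htri : (Matrix.of fun i j : Fin (n+1) => f i ((B^(j:ℕ)) x)).BlockTriangular id := by
      intro i j hij
      exact hN0 (i:ℕ) (j:ℕ) (by exact_mod_cast hij)
    have h3 : (Matrix.of fun i j : Fin (n+1) => f i ((B^(j:ℕ)) x)).det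
        = ∏ j : Fin (n+1), γ (j:ℕ) := by
      rw [Matrix.det_of_upperTriangular htri]
      exact Finset.prod_congr rfl fun j _ => hNd (j:ℕ)
    have h4 : ((Mp n).det).coeff (∑ j : Fin (n+1), (j:ℕ)) ≠ 0 := by
      rw [h1, h2, h3]
      exact Finset.prod_ne_zero_iff.2 fun j _ => hγ (j:ℕ)
    intro hcontra
    rw [hcontra] at h4
    simp at h4
  -- choose a good real parameter t0
  set bad : Set ℂ := ⋃ n : ℕ, {z : ℂ | ((Mp n).det).IsRoot z} with hbad
  have hbadc : bad.Countable :=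
    Set.countable_iUnion fun n => (Polynomial.finite_setOf_isRoot (hD0 n)).countable
  have hnotsub : ¬ (Set.Ioo (0:ℝ) δ ⊆ (fun r : ℝ => (r:ℂ)) ⁻¹' bad) := by
    intro hsub
    have hc1 : ((fun r : ℝ => (r:ℂ)) ⁻¹' bad).Countable :=
      hbadc.preimage Complex.ofReal_injective
    have hc2 : (Set.Ioo (0:ℝ) δ).Countable := hc1.mono hsub
    have hm := hc2.measure_zero (MeasureTheory.volume)
    rw [Real.volume_Ioo] at hm
    have : ENNReal.ofReal (δ - 0) ≠ 0 := by
      simp [ENNReal.ofReal_eq_zero]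
      linarith
    exact this hm
  obtain ⟨t0, ht0mem, ht0bad⟩ : ∃ t0 : ℝ, t0 ∈ Set.Ioo (0:ℝ) δ ∧ ((t0:ℝ):ℂ) ∉ bad := by
    rw [Set.not_subset] at hnotsub
    obtain ⟨t0, h1, h2⟩ := hnotsub
    exact ⟨t0, h1, h2⟩
  have ht0pos : 0 < t0 := ht0mem.1
  have ht0δ : t0 < δ := ht0mem.2
  -- the perturbed operator
  refine ⟨A + ((t0:ℝ):ℂ) • B, ?_, ?_, ?_⟩
  · -- norm at most one
    refine (norm_add_le _ _).trans ?_
    have h1 : ‖A‖ ≤ 1 - δ := by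
      rw [hA]
      refine (ContinuousLinearMap.opNorm_smul_le _ _).trans ?_
      rw [Complex.norm_real, Real.norm_eq_abs, abs_of_nonneg (by linarith)]
      nlinarith [norm_nonneg T]
    have h2 : ‖((t0:ℝ):ℂ) • B‖ ≤ t0 := by
      refine (ContinuousLinearMap.opNorm_smul_le _ _).trans ?_
      rw [Complex.norm_real, Real.norm_eq_abs, abs_of_pos ht0pos]
      nlinarith
    linarith
  · -- close to T
    have hTA : T - A = ((δ:ℝ):ℂ) • T := by
      have h1 : ((δ:ℝ):ℂ) = 1 - ((1-δ:ℝ):ℂ) := by push_cast; ring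
      rw [hA, h1, sub_smul, one_smul]
    have h2 : T - (A + ((t0:ℝ):ℂ) • B) = ((δ:ℝ):ℂ) • T - ((t0:ℝ):ℂ) • B := by
      rw [sub_add_eq_sub_sub, hTA]
    rw [h2]
    refine (norm_sub_le _ _).trans_lt ?_
    have h3 : ‖((δ:ℝ):ℂ) • T‖ ≤ δ := by
      refine (ContinuousLinearMap.opNorm_smul_le _ _).trans ?_
      rw [Complex.norm_real, Real.norm_eq_abs, abs_of_pos hδpos]
      nlinarith
    have h4 : ‖((t0:ℝ):ℂ) • B‖ ≤ t0 := by
      refine (ContinuousLinearMap.opNorm_smul_le _ _).trans ?_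
      rw [Complex.norm_real, Real.norm_eq_abs, abs_of_pos ht0pos]
      nlinarith
    have : δ + δ < ε := by linarith [hδε]
    linarith
  · -- linear independence of the orbit
    set S : X →L[ℂ] X := A + ((t0:ℝ):ℂ) • B with hS
    have hdetS : ∀ n : ℕ,
        (Matrix.of fun i j : Fin (n+1) => f (i:ℕ) ((S^(j:ℕ)) x)).det ≠ 0 := by
      intro n
      have h1 : (Matrix.of fun i j : Fin (n+1) => f (i:ℕ) ((S^(j:ℕ)) x))
          = (Polynomial.evalRingHom ((t0:ℝ):ℂ)).mapMatrix (Mp n) := by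
        ext i j
        rw [RingHom.mapMatrix_apply, Matrix.map_apply, Polynomial.coe_evalRingHom,
          heval ((t0:ℝ):ℂ) n i j]
        rfl
      rw [h1, ← RingHom.map_det]
      have h2 : ((t0:ℝ):ℂ) ∉ {z : ℂ | ((Mp n).det).IsRoot z} := by
        intro hmem
        exact ht0bad (Set.mem_iUnion.2 ⟨n, hmem⟩)
      simpa [Polynomial.IsRoot] using h2
    rw [linearIndependent_iff']
    intro s g hg i hi
    set n : ℕ := s.sup id with hn
    have hsub : s ⊆ Finset.range (n+1) := by
      intro m hm
      rw [Finset.mem_range]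
      exact Nat.lt_succ_of_le (Finset.le_sup (f := id) hm)
    set w : Fin (n+1) → ℂ := fun j => if (j:ℕ) ∈ s then g (j:ℕ) else 0 with hwdef
    set M : Matrix (Fin (n+1)) (Fin (n+1)) ℂ :=
      Matrix.of fun i j : Fin (n+1) => f (i:ℕ) ((S^(j:ℕ)) x) with hM
    have hzero : ∑ j : Fin (n+1), w j • (S^(j:ℕ)) x = 0 := by
      rw [Fin.sum_univ_eq_sum_range (fun m => (if m ∈ s then g m else 0) • (S^m) x) (n+1)]
      rw [← Finset.sum_subset hsub (fun m _ hm => by rw [if_neg hm, zero_smul])]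
      rw [← hg]
      exact Finset.sum_congr rfl fun m hm => by rw [if_pos hm]
    have hMw : M.mulVec w = 0 := by
      funext i
      rw [Matrix.mulVec, dotProduct]
      have h1 : ∀ j : Fin (n+1), M i j * w j = f (i:ℕ) (w j • (S^(j:ℕ)) x) := by
        intro j
        rw [map_smul, smul_eq_mul, hM, Matrix.of_apply, mul_comm]
      rw [Finset.sum_congr rfl fun j _ => h1 j, ← map_sum, hzero, map_zero]
      rfl
    have hwzero : w = 0 := by
      have hu : IsUnit M.det := isUnit_iff_ne_zero.2 (hdetS n)
      calc w = (M⁻¹ * M).mulVec w := by rw [Matrix.nonsing_inv_mul _ hu, Matrix.one_mulVec]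
      _ = M⁻¹.mulVec (M.mulVec w) := by rw [← Matrix.mulVec_mulVec]
      _ = 0 := by rw [hMw, Matrix.mulVec_zero]
    have hilt : i < n + 1 := Finset.mem_range.mp (hsub hi)
    have := congrFun hwzero ⟨i, hilt⟩
    rw [hwdef] at this
    simpa [hi] using this
end

section
/- Let X be a finite-dimensional Banach space and x ∈ X a nonzero vector. Then the set of bounded linear operators T on X for which x is a cyclic vector (i.e., span{x, Tx, T²x, …} = X) is open and dense in L(X) with the operator-norm topology. -/
open Module Polynomial Submodule Matrix

lemma aux_span_fin {X : Type*} [NormedAddCommGroup X] [NormedSpace ℂ X] [FiniteDimensional ℂ X]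
    (T : X →L[ℂ] X) (x : X) :
    span ℂ (Set.range fun n : ℕ => (T ^ n) x) = ⊤ ↔
    span ℂ (Set.range fun i : Fin (finrank ℂ X) => (T ^ (i : ℕ)) x) = ⊤ := by
  set n := finrank ℂ X with hn
  rcases Nat.eq_zero_or_pos n with h0 | hn0
  · have hs : Subsingleton X := finrank_zero_iff.mp (hn ▸ h0)
    have : ∀ W : Submodule ℂ X, W = ⊤ := fun W => Subsingleton.elim _ _
    simp [this]
  constructor
  · intro h
    set W := span ℂ (Set.range fun i : Fin n => (T ^ (i : ℕ)) x) with hW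
    have hgen : ∀ i : Fin n, (T ^ (i : ℕ)) x ∈ W := fun i =>
      subset_span (Set.mem_range_self i)
    -- Cayley-Hamilton: T^n x ∈ W
    have hCH : (T ^ n) x ∈ W := by
      set f := (T : X →ₗ[ℂ] X) with hf
      have hcp : ∀ k : ℕ, (f ^ k) x = (T ^ k) x := by
        intro k
        have : (f ^ k) = ((T ^ k : X →L[ℂ] X) : X →ₗ[ℂ] X) :=
          (map_pow (ContinuousLinearMap.toLinearMapRingHom) T k).symm
        rw [this]; rfl
      have hdeg : f.charpoly.natDegree = n := LinearMap.charpoly_natDegree f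
      have h0' : Polynomial.aeval f f.charpoly = 0 := LinearMap.aeval_self_charpoly f
      have hsum : (0 : X) = ∑ i ∈ Finset.range (n + 1), f.charpoly.coeff i • (f ^ i) x := by
        have := Polynomial.aeval_eq_sum_range' (p := f.charpoly) (n := n + 1)
          (by omega) f
        rw [h0'] at this
        calc (0 : X) = (0 : X →ₗ[ℂ] X) x := rfl
          _ = _ := by rw [this]; simp [LinearMap.sum_apply, LinearMap.smul_apply]
      have hlead : f.charpoly.coeff n = 1 := by
        have := (LinearMap.charpoly_monic f).leadingCoeff
        rwa [Polynomial.leadingCoeff, hdeg] at this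
      rw [Finset.sum_range_succ, hlead, one_smul] at hsum
      have : (T ^ n) x = -∑ i ∈ Finset.range n, f.charpoly.coeff i • (f ^ i) x := by
        rw [← hcp n]; exact eq_neg_of_add_eq_zero_right hsum.symm
      rw [this]
      refine neg_mem (Submodule.sum_mem _ fun i hi => Submodule.smul_mem _ _ ?_)
      rw [hcp i]
      exact hgen ⟨i, Finset.mem_range.mp hi⟩
    -- W is invariant
    have hinv : ∀ y ∈ W, T y ∈ W := by
      intro y hy
      induction hy using Submodule.span_induction with
      | mem y hy =>
          obtain ⟨i, rfl⟩ := hy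
          have : T ((T ^ (i : ℕ)) x) = (T ^ ((i : ℕ) + 1)) x := by
            rw [pow_succ']; rfl
          rw [this]
          rcases Nat.lt_or_ge ((i : ℕ) + 1) n with h | h
          · exact hgen ⟨(i : ℕ) + 1, h⟩
          · have : (i : ℕ) + 1 = n := le_antisymm (Nat.succ_le_of_lt i.isLt) h
            rwa [this]
      | zero => simpa using zero_mem W
      | add a b _ _ ha hb => simpa [map_add] using add_mem ha hb
      | smul c a _ ha => simpa [_root_.map_smul] using Submodule.smul_mem _ _ ha
    have hall : ∀ k : ℕ, (T ^ k) x ∈ W := by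
      intro k
      induction k with
      | zero => simpa using hgen ⟨0, hn0⟩
      | succ k ih =>
          have : (T ^ (k + 1)) x = T ((T ^ k) x) := by rw [pow_succ']; rfl
          rw [this]; exact hinv _ ih
    rw [eq_top_iff, ← h]
    exact span_le.mpr (by rintro _ ⟨k, rfl⟩; exact hall k)
  · intro h
    rw [eq_top_iff, ← h]
    exact span_le.mpr (by rintro _ ⟨i, rfl⟩; exact subset_span ⟨(i : ℕ), rfl⟩)

lemma aux_det {X : Type*} [NormedAddCommGroup X] [NormedSpace ℂ X] [FiniteDimensional ℂ X]
    (b : Basis (Fin (finrank ℂ X)) ℂ X) (x : X) (T : X →L[ℂ] X) :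
    span ℂ (Set.range fun i : Fin (finrank ℂ X) => (T ^ (i : ℕ)) x) = ⊤ ↔
      b.det (fun i : Fin (finrank ℂ X) => (T ^ (i : ℕ)) x) ≠ 0 := by
  constructor
  · intro h
    have hli : LinearIndependent ℂ (fun i : Fin (finrank ℂ X) => (T ^ (i : ℕ)) x) :=
      linearIndependent_of_top_le_span_of_card_eq_finrank h.ge (by simp)
    exact IsUnit.ne_zero ((Basis.is_basis_iff_det b).mp ⟨hli, h⟩)
  · intro h
    exact ((Basis.is_basis_iff_det b).mpr (isUnit_iff_ne_zero.mpr h)).2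

lemma aux_cont {X : Type*} [NormedAddCommGroup X] [NormedSpace ℂ X] [FiniteDimensional ℂ X]
    (b : Basis (Fin (finrank ℂ X)) ℂ X) (x : X) :
    Continuous fun T : X →L[ℂ] X => b.det (fun i : Fin (finrank ℂ X) => (T ^ (i : ℕ)) x) := by
  simp only [Basis.det_apply]
  apply Continuous.matrix_det
  apply continuous_matrix
  intro i j
  simp only [Basis.toMatrix_apply]
  have h1 : Continuous fun T : X →L[ℂ] X => (T ^ (j : ℕ)) x :=
    (ContinuousLinearMap.apply ℂ X x).continuous.comp (continuous_pow (j : ℕ))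
  have h2 : Continuous fun y : X => b.repr y i :=
    (LinearMap.continuous_of_finiteDimensional ((b.coord i) : X →ₗ[ℂ] ℂ))
  exact h2.comp h1

lemma aux_poly {X : Type*} [NormedAddCommGroup X] [NormedSpace ℂ X] [FiniteDimensional ℂ X]
    (b : Basis (Fin (finrank ℂ X)) ℂ X) (x : X) (T U : X →L[ℂ] X) :
    ∃ P : Polynomial ℂ, ∀ z : ℂ,
      P.eval z = b.det (fun i : Fin (finrank ℂ X) => (((T + z • U) ^ (i : ℕ)) x)) := by
  classical
  set A := LinearMap.toMatrix b b (T : X →ₗ[ℂ] X) with hA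
  set B := LinearMap.toMatrix b b (U : X →ₗ[ℂ] X) with hB
  set Q : Matrix (Fin (finrank ℂ X)) (Fin (finrank ℂ X)) (Polynomial ℂ) :=
    Matrix.of fun i j => Polynomial.C (A i j) + Polynomial.X * Polynomial.C (B i j) with hQ
  set xc : Fin (finrank ℂ X) → Polynomial ℂ := fun i => Polynomial.C (b.repr x i) with hxc
  refine ⟨Matrix.det (Matrix.of fun (i j : Fin (finrank ℂ X)) => ((Q ^ (j : ℕ)) *ᵥ xc) i),
    fun z => ?_⟩
  set φ := Polynomial.evalRingHom z with hφ
  have htmpow : ∀ (f : X →ₗ[ℂ] X) (k : ℕ),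
      LinearMap.toMatrix b b (f ^ k) = (LinearMap.toMatrix b b f) ^ k := by
    intro f k
    induction k with
    | zero => simp
    | succ k ih => rw [pow_succ, pow_succ, ← ih, ← LinearMap.toMatrix_mul]
  have hPev : Polynomial.eval z
        (Matrix.det (Matrix.of fun (i j : Fin (finrank ℂ X)) => ((Q ^ (j : ℕ)) *ᵥ xc) i))
      = Matrix.det ((Matrix.of fun (i j : Fin (finrank ℂ X)) => ((Q ^ (j : ℕ)) *ᵥ xc) i).map φ) := by
    show φ _ = _
    rw [RingHom.map_det, RingHom.mapMatrix_apply]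
  rw [hPev, Basis.det_apply]
  congr 1
  ext i j
  have hQmap : Q.map φ = A + z • B := by
    ext i' j'
    simp [hQ, hφ, Matrix.map_apply]
    ring
  have hQpow : (Q ^ (j : ℕ)).map φ = (A + z • B) ^ (j : ℕ) := by
    have := map_pow (φ.mapMatrix) Q (j : ℕ)
    rw [RingHom.mapMatrix_apply, RingHom.mapMatrix_apply] at this
    rw [this, hQmap]
  have hAB : A + z • B = LinearMap.toMatrix b b (((T + z • U : X →L[ℂ] X)) : X →ₗ[ℂ] X) := by
    rw [hA, hB]
    have h1 : (((T + z • U : X →L[ℂ] X)) : X →ₗ[ℂ] X)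
        = (T : X →ₗ[ℂ] X) + z • (U : X →ₗ[ℂ] X) := by
      ext y; simp
    rw [h1, map_add, _root_.map_smul]
  have hpowmat : (A + z • B) ^ (j : ℕ)
      = LinearMap.toMatrix b b ((((T + z • U) ^ (j : ℕ) : X →L[ℂ] X)) : X →ₗ[ℂ] X) := by
    have h1 : ((((T + z • U) ^ (j : ℕ) : X →L[ℂ] X)) : X →ₗ[ℂ] X)
        = (((T + z • U : X →L[ℂ] X)) : X →ₗ[ℂ] X) ^ (j : ℕ) :=
      map_pow (ContinuousLinearMap.toLinearMapRingHom) (T + z • U) (j : ℕ)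
    rw [hAB, h1, htmpow]
  calc ((Matrix.of fun (i j : Fin (finrank ℂ X)) => ((Q ^ (j : ℕ)) *ᵥ xc) i).map φ) i j
      = φ (((Q ^ (j : ℕ)) *ᵥ xc) i) := rfl
    _ = (((Q ^ (j : ℕ)).map φ) *ᵥ (φ ∘ xc)) i := RingHom.map_mulVec φ _ _ i
    _ = ((LinearMap.toMatrix b b ((((T + z • U) ^ (j : ℕ) : X →L[ℂ] X)) : X →ₗ[ℂ] X))
          *ᵥ (b.repr x)) i := by
        rw [hQpow, hpowmat]
        congr 1
        ext k
        simp [hxc, hφ]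
    _ = b.repr ((((T + z • U) ^ (j : ℕ) : X →L[ℂ] X) : X →ₗ[ℂ] X) x) i := by
        rw [LinearMap.toMatrix_mulVec_repr]
    _ = b.toMatrix (fun i : Fin (finrank ℂ X) => (((T + z • U) ^ (i : ℕ)) x)) i j := by
        rw [Basis.toMatrix_apply]; rfl

open Fin.NatCast in
lemma aux_exists {X : Type*} [NormedAddCommGroup X] [NormedSpace ℂ X] [FiniteDimensional ℂ X]
    (x : X) (hx : x ≠ 0) :
    ∃ (b : Basis (Fin (finrank ℂ X)) ℂ X) (S : X →L[ℂ] X),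
      b.det (fun i : Fin (finrank ℂ X) => (S ^ (i : ℕ)) x) ≠ 0 := by
  classical
  haveI : Nontrivial X := nontrivial_of_ne x 0 hx
  have hn0 : 0 < finrank ℂ X := finrank_pos
  haveI : NeZero (finrank ℂ X) := ⟨hn0.ne'⟩
  have hs : LinearIndepOn ℂ id ({x} : Set X) :=
    LinearIndepOn.singleton (by simpa using hx)
  let b0 := Basis.extend hs
  haveI := FiniteDimensional.fintypeBasisIndex b0
  have hcard : Fintype.card (hs.extend (Set.subset_univ _)) = finrank ℂ X :=
    (finrank_eq_card_basis b0).symm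
  let e : Fin (finrank ℂ X) ≃ (hs.extend (Set.subset_univ _)) :=
    (Fintype.equivFinOfCardEq hcard).symm
  let b1 := b0.reindex e.symm
  have hxmem : x ∈ hs.extend (Set.subset_univ _) := hs.subset_extend _ rfl
  let j : Fin (finrank ℂ X) := e.symm ⟨x, hxmem⟩
  have hb1j : b1 j = x := by
    have h1 : b1 j = b0 (e j) := by
      simp [b1, Basis.reindex_apply]
    rw [h1]
    have : e j = ⟨x, hxmem⟩ := by simp [j]
    rw [this]
    exact Basis.extend_apply_self hs _
  let σ : Equiv.Perm (Fin (finrank ℂ X)) := Equiv.swap j 0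
  let b2 := b1.reindex σ
  have hb2 : b2 0 = x := by
    have : b2 0 = b1 (σ.symm 0) := Basis.reindex_apply _ _ _
    rw [this]
    have : σ.symm 0 = j := by simp [σ, Equiv.symm_swap, Equiv.swap_apply_right]
    rw [this, hb1j]
  let Sl : X →ₗ[ℂ] X := b2.constr ℂ (fun i => b2 (i + 1))
  let S : X →L[ℂ] X := LinearMap.toContinuousLinearMap Sl
  have hSb : ∀ i, S (b2 i) = b2 (i + 1) := fun i => b2.constr_basis ℂ _ i
  have hSpow : ∀ k : ℕ, (S ^ k) x = b2 ((k : Fin (finrank ℂ X))) := by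
    intro k
    induction k with
    | zero => simpa using hb2.symm
    | succ k ih =>
        have h1 : (S ^ (k + 1)) x = S ((S ^ k) x) := by rw [pow_succ']; rfl
        rw [h1, ih, hSb]
        congr 1
        push_cast
        ring
  refine ⟨b2, S, ?_⟩
  have : (fun i : Fin (finrank ℂ X) => (S ^ (i : ℕ)) x) = ⇑b2 := by
    funext i
    rw [hSpow (i : ℕ), Fin.cast_val_eq_self]
  rw [this, Basis.det_self]
  exact one_ne_zero

/-- On a finite-dimensional Banach space, the set of operators for which a fixed nonzero
vector `x` is cyclic is open and dense in the operator-norm topology. -/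
theorem stmt4 {X : Type*} [NormedAddCommGroup X] [NormedSpace ℂ X] [FiniteDimensional ℂ X]
    (x : X) (hx : x ≠ 0) :
    IsOpen {T : X →L[ℂ] X | Submodule.span ℂ (Set.range fun n : ℕ => (T ^ n) x) = ⊤} ∧
    Dense {T : X →L[ℂ] X | Submodule.span ℂ (Set.range fun n : ℕ => (T ^ n) x) = ⊤} := by
  obtain ⟨b, S, hS⟩ := aux_exists x hx
  set D : (X →L[ℂ] X) → ℂ := fun T => b.det (fun i : Fin (finrank ℂ X) => (T ^ (i : ℕ)) x)
    with hD
  have hset : {T : X →L[ℂ] X | Submodule.span ℂ (Set.range fun n : ℕ => (T ^ n) x) = ⊤}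
      = D ⁻¹' {(0 : ℂ)}ᶜ := by
    ext T
    simp only [Set.mem_setOf_eq, Set.mem_preimage, Set.mem_compl_iff, Set.mem_singleton_iff]
    rw [aux_span_fin T x, aux_det b x T]
  constructor
  · rw [hset]
    exact isOpen_compl_singleton.preimage (aux_cont b x)
  · rw [hset]
    intro T
    obtain ⟨P, hP⟩ := aux_poly b x T (S - T)
    have hP1 : P.eval 1 = D S := by
      rw [hP 1]
      simp [hD]
    have hPne : P ≠ 0 := by
      intro h
      rw [h] at hP1
      simp at hP1
      exact hS hP1.symm
    have hfin : {z : ℂ | P.IsRoot z}.Finite := Polynomial.finite_setOf_isRoot hPne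
    have hdense : Dense {z : ℂ | P.IsRoot z}ᶜ := hfin.countable.dense_compl ℂ
    have h0cl : (0 : ℂ) ∈ closure {z : ℂ | P.IsRoot z}ᶜ := hdense 0
    set g : ℂ → (X →L[ℂ] X) := fun z => T + z • (S - T) with hg
    have hgc : Continuous g := by
      apply continuous_const.add
      exact continuous_id.smul continuous_const
    have hsub : g '' {z : ℂ | P.IsRoot z}ᶜ ⊆ D ⁻¹' {(0 : ℂ)}ᶜ := by
      rintro _ ⟨z, hz, rfl⟩
      simp only [Set.mem_preimage, Set.mem_compl_iff, Set.mem_singleton_iff]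
      have : D (g z) = P.eval z := (hP z).symm
      rw [this]
      exact hz
    have hT : T = g 0 := by simp [hg]
    rw [hT]
    have h1 : g 0 ∈ g '' closure {z : ℂ | P.IsRoot z}ᶜ := Set.mem_image_of_mem g h0cl
    have h2 : g 0 ∈ closure (g '' {z : ℂ | P.IsRoot z}ᶜ) :=
      image_closure_subset_closure_image hgc h1
    exact closure_mono hsub h2
end

section
/- Let X be a finite-dimensional Banach space and E ⊆ X \ {0} a countable set. Then the set of operators T ∈ L(X) for which every x ∈ E is a cyclic vector is a dense Gδ subset of L(X) in the norm topology. -/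
open Module Set Submodule Polynomial

section Aux

variable {X : Type*} [NormedAddCommGroup X] [NormedSpace ℂ X] [FiniteDimensional ℂ X]

/-- Krylov stabilization: the span of all iterates of `x` under `T` equals the span of
the first `finrank ℂ X` iterates. -/
lemma krylov_span (T : X →ₗ[ℂ] X) (x : X) :
    span ℂ ((fun n : ℕ => (T ^ n) x) '' Set.Iio (finrank ℂ X))
      = span ℂ (Set.range fun n : ℕ => (T ^ n) x) := by
  set d := finrank ℂ X with hd
  set W : ℕ → Submodule ℂ X := fun k => span ℂ ((fun n : ℕ => (T ^ n) x) '' Set.Iio k) with hW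
  have hmono : Monotone W := fun a b hab =>
    span_mono (Set.image_mono (Set.Iio_subset_Iio hab))
  have hle : ∀ k, W k ≤ span ℂ (Set.range fun n : ℕ => (T ^ n) x) := fun k =>
    span_mono (Set.image_subset_range _ _)
  have hmem : ∀ k n, n < k → (T ^ n) x ∈ W k := fun k n h => subset_span ⟨n, h, rfl⟩
  have hinsert : ∀ k : ℕ, W (k + 1) = span ℂ {(T ^ k) x} ⊔ W k := by
    intro k
    have : Set.Iio (k + 1) = insert k (Set.Iio k) := by ext n; simp
    rw [hW]
    simp only [this, Set.image_insert_eq, Submodule.span_insert]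
  have hmap : ∀ k, Submodule.map T (W k) ≤ W (k + 1) := by
    intro k
    rw [hW, Submodule.map_span, Submodule.span_le]
    rintro _ ⟨_, ⟨n, hn, rfl⟩, rfl⟩
    show T ((T ^ n) x) ∈ (W (k + 1) : Set X)
    rw [← Module.End.mul_apply, ← pow_succ']
    exact hmem (k + 1) (n + 1) (by simpa using hn)
  have hstep : ∀ k, W (k + 1) = W k → W (k + 2) = W (k + 1) := by
    intro k hk
    refine le_antisymm ?_ (hmono (by omega))
    rw [hinsert (k + 1)]
    refine sup_le ?_ (hmono (by omega))
    rw [Submodule.span_le, Set.singleton_subset_iff]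
    have h1 : (T ^ k) x ∈ W k := hk ▸ hmem (k + 1) k (by omega)
    have h2 : T ((T ^ k) x) ∈ W (k + 1) := hmap k ⟨_, h1, rfl⟩
    rw [← Module.End.mul_apply, ← pow_succ'] at h2
    exact h2
  have hstab : ∀ k, W (k + 1) = W k → ∀ j, W (k + j) = W k := by
    intro k hk j
    induction j with
    | zero => rfl
    | succ j ih =>
      have hrep : ∀ j, W (k + j + 1) = W (k + j) := by
        intro j
        induction j with
        | zero => exact hk
        | succ j ih2 => exact hstep (k + j) ih2
      rw [show k + (j + 1) = k + j + 1 by omega, hrep j, ih]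
  have hex : ∃ k ≤ d, W (k + 1) = W k := by
    by_contra h
    push_neg at h
    have hlt : ∀ k ≤ d, W k < W (k + 1) := fun k hk =>
      lt_of_le_of_ne (hmono (by omega)) (fun he => h k hk he.symm)
    have hrank : ∀ k ≤ d + 1, k ≤ finrank ℂ (W k) := by
      intro k
      induction k with
      | zero => omega
      | succ k ih =>
        intro hk
        have := Submodule.finrank_lt_finrank_of_lt (hlt k (by omega))
        have := ih (by omega)
        omega
    have h1 := hrank (d + 1) le_rfl
    have h2 : finrank ℂ (W (d + 1)) ≤ d := hd ▸ Submodule.finrank_le _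
    omega
  obtain ⟨k, hkd, hk⟩ := hex
  have htop : span ℂ (Set.range fun n : ℕ => (T ^ n) x) ≤ W k := by
    rw [Submodule.span_le]
    rintro _ ⟨n, rfl⟩
    have h1 : (T ^ n) x ∈ W (k + (n + 1)) := hmem _ n (by omega)
    rwa [hstab k hk (n + 1)] at h1
  exact le_antisymm (hle d) (htop.trans (hmono hkd))

/-- A family of `finrank` vectors spans iff its determinant w.r.t. a basis is nonzero. -/
lemma span_top_iff_det (v : Fin (finrank ℂ X) → X) :
    span ℂ (Set.range v) = ⊤ ↔ ((Module.finBasis ℂ X).toMatrix v).det ≠ 0 := by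
  rw [← Basis.det_apply]
  constructor
  · intro h
    have hli : LinearIndependent ℂ v :=
      linearIndependent_of_top_le_span_of_card_eq_finrank h.ge (by simp)
    exact isUnit_iff_ne_zero.mp ((Basis.is_basis_iff_det _).mp ⟨hli, h⟩)
  · intro h
    exact ((Basis.is_basis_iff_det _).mpr (isUnit_iff_ne_zero.mpr h)).2

/-- `x` is cyclic for `T` iff the Krylov determinant is nonzero. -/
lemma cyclic_iff_det (T : X →L[ℂ] X) (x : X) :
    span ℂ (Set.range fun n : ℕ => (T ^ n) x) = ⊤ ↔
      ((Module.finBasis ℂ X).toMatrix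
        fun i : Fin (finrank ℂ X) => (T ^ (i : ℕ)) x).det ≠ 0 := by
  have hco : ∀ n : ℕ, (T ^ n) x = ((T : X →ₗ[ℂ] X) ^ n) x := fun n => by
    simp [ContinuousLinearMap.coe_pow, Module.End.pow_apply]
  rw [← span_top_iff_det]
  have h1 : (Set.range fun i : Fin (finrank ℂ X) => (T ^ (i : ℕ)) x)
      = (fun n : ℕ => ((T : X →ₗ[ℂ] X) ^ n) x) '' Set.Iio (finrank ℂ X) := by
    simp_rw [hco]
    ext y
    constructor
    · rintro ⟨i, rfl⟩; exact ⟨i, i.2, rfl⟩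
    · rintro ⟨n, hn, rfl⟩; exact ⟨⟨n, hn⟩, rfl⟩
  have h2 : (Set.range fun n : ℕ => (T ^ n) x)
      = Set.range fun n : ℕ => ((T : X →ₗ[ℂ] X) ^ n) x := by simp_rw [hco]
  rw [h1, h2, krylov_span]

lemma pow_mulVec_repr (b : Basis (Fin (finrank ℂ X)) ℂ X) (M : X →ₗ[ℂ] X) (x : X) (j : ℕ) :
    Matrix.mulVec ((LinearMap.toMatrix b b M) ^ j) ⇑(b.repr x) = ⇑(b.repr ((M ^ j) x)) := by
  induction j with
  | zero => simp [Matrix.one_mulVec]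
  | succ j ih =>
    rw [pow_succ', ← Matrix.mulVec_mulVec, ih, LinearMap.toMatrix_mulVec_repr,
      pow_succ', Module.End.mul_apply]

lemma toMatrix_krylov (b : Basis (Fin (finrank ℂ X)) ℂ X) (M : X →ₗ[ℂ] X) (x : X) :
    b.toMatrix (fun i : Fin (finrank ℂ X) => (M ^ (i : ℕ)) x)
      = Matrix.of fun i j : Fin (finrank ℂ X) =>
          Matrix.mulVec ((LinearMap.toMatrix b b M) ^ (j : ℕ)) ⇑(b.repr x) i := by
  ext i j
  rw [Basis.toMatrix_apply, Matrix.of_apply, pow_mulVec_repr]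

/-- Every nonzero vector is cyclic for some operator. -/
lemma exists_cyclic (x : X) (hx : x ≠ 0) :
    ∃ S : X →L[ℂ] X, span ℂ (Set.range fun n : ℕ => (S ^ n) x) = ⊤ := by
  set d := finrank ℂ X with hd
  have hd0 : 0 < d := finrank_pos_iff.mpr ⟨⟨x, 0, hx⟩⟩
  have hli : LinearIndepOn ℂ id ({x} : Set X) :=
    LinearIndepOn.singleton hx
  obtain ⟨c, hc0⟩ : ∃ c : Basis (Fin d) ℂ X, c ⟨0, hd0⟩ = x := by
    let s := hli.extend (Set.subset_univ _)
    have hxs : x ∈ s := hli.subset_extend _ rfl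
    let b0 : Basis s ℂ X := Basis.extend hli
    have hcard : Fintype.card s = d := by
      rw [hd, finrank_eq_card_basis b0]
    let e0 : s ≃ Fin d := Fintype.equivFinOfCardEq hcard
    let e : s ≃ Fin d := e0.trans (Equiv.swap (e0 ⟨x, hxs⟩) ⟨0, hd0⟩)
    refine ⟨b0.reindex e, ?_⟩
    rw [Basis.reindex_apply]
    have : e.symm ⟨0, hd0⟩ = ⟨x, hxs⟩ := by
      simp [e, Equiv.symm_apply_eq]
    rw [this]
    exact Basis.extend_apply_self hli ⟨x, hxs⟩
  set u : Fin d → X := fun i => if h : (i : ℕ) + 1 < d then c ⟨(i : ℕ) + 1, h⟩ else 0 with hu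
  set S0 : X →ₗ[ℂ] X := c.constr ℂ u with hS0
  refine ⟨LinearMap.toContinuousLinearMap S0, ?_⟩
  have hco : ∀ n : ℕ, ((LinearMap.toContinuousLinearMap S0) ^ n) x = (S0 ^ n) x := fun n => by
    simp [ContinuousLinearMap.coe_pow, Module.End.pow_apply,
      LinearMap.coe_toContinuousLinearMap]
  have hiter : ∀ k (hk : k < d), (S0 ^ k) x = c ⟨k, hk⟩ := by
    intro k
    induction k with
    | zero => intro hk; rw [pow_zero]; exact hc0.symm
    | succ k ih =>
      intro hk
      rw [pow_succ', Module.End.mul_apply, ih (by omega), hS0, Basis.constr_basis, hu]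
      simp only [dif_pos hk]
  rw [eq_top_iff, ← c.span_eq]
  apply span_mono
  rintro _ ⟨i, rfl⟩
  refine ⟨(i : ℕ), ?_⟩
  show (LinearMap.toContinuousLinearMap S0 ^ (i : ℕ)) x = c i
  rw [hco (i : ℕ), hiter (i : ℕ) i.2]

/-- The set of operators for which a fixed nonzero `x` is cyclic is dense. -/
lemma dense_cyclic (x : X) (hx : x ≠ 0) :
    Dense {T : X →L[ℂ] X | span ℂ (Set.range fun n : ℕ => (T ^ n) x) = ⊤} := by
  obtain ⟨S, hS⟩ := exists_cyclic x hx
  rw [Metric.dense_iff]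
  intro T₀ ε hε
  set d := finrank ℂ X with hd
  set b := Module.finBasis ℂ X with hb
  set A := LinearMap.toMatrix b b (T₀ : X →ₗ[ℂ] X) with hA
  set Bm := LinearMap.toMatrix b b ((S : X →ₗ[ℂ] X) - (T₀ : X →ₗ[ℂ] X)) with hBm
  set w : Fin d → ℂ[X] := fun k => C (b.repr x k) with hw
  set P : Matrix (Fin d) (Fin d) ℂ[X] :=
    A.map C + (Polynomial.X : ℂ[X]) • Bm.map C with hP
  set f : ℂ[X] := (Matrix.of fun i j : Fin d => Matrix.mulVec (P ^ (j : ℕ)) w i).det with hf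
  have hPmap : ∀ z : ℂ, P.map (eval z) = A + z • Bm := by
    intro z
    ext i j
    rw [hP]
    simp only [Matrix.map_apply, Matrix.add_apply, Matrix.smul_apply, smul_eq_mul,
      eval_add, eval_mul, eval_X, eval_C]
  have heval : ∀ z : ℂ,
      eval z f = (Matrix.of fun i j : Fin d =>
        Matrix.mulVec ((A + z • Bm) ^ (j : ℕ)) ⇑(b.repr x) i).det := by
    intro z
    rw [hf, show eval z = evalRingHom z from rfl, RingHom.map_det]
    congr 1
    ext i j
    rw [RingHom.mapMatrix_apply]
    have hpow : (P ^ (j : ℕ)).map (evalRingHom z) = (A + z • Bm) ^ (j : ℕ) := by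
      rw [show (P ^ (j : ℕ)).map (evalRingHom z)
            = (evalRingHom z).mapMatrix (P ^ (j : ℕ)) from rfl, map_pow]
      rw [show (evalRingHom z).mapMatrix P = P.map (evalRingHom z) from rfl]
      rw [show P.map (evalRingHom z) = P.map (eval z) from rfl, hPmap z]
    simp only [Matrix.map_apply, Matrix.of_apply, Matrix.mulVec, dotProduct, map_sum,
      map_mul]
    refine Finset.sum_congr rfl fun k _ => ?_
    rw [show (evalRingHom z) ((P ^ (j : ℕ)) i k) = ((P ^ (j : ℕ)).map (evalRingHom z)) i k
        from rfl, hpow]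
    simp [hw]
  have hop : ∀ z : ℂ,
      eval z f = (b.toMatrix fun i : Fin d =>
        (((T₀ + z • (S - T₀)) : X →L[ℂ] X) ^ (i : ℕ)) x).det := by
    intro z
    have hco : ∀ n : ℕ, (((T₀ + z • (S - T₀)) : X →L[ℂ] X) ^ n) x
        = ((((T₀ : X →ₗ[ℂ] X) + z • ((S : X →ₗ[ℂ] X) - (T₀ : X →ₗ[ℂ] X)))) ^ n) x := by
      intro n
      have hfun : (⇑(T₀ + z • (S - T₀)) : X → X)
          = ⇑((T₀ : X →ₗ[ℂ] X) + z • ((S : X →ₗ[ℂ] X) - (T₀ : X →ₗ[ℂ] X))) := by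
        ext y; simp
      simp [ContinuousLinearMap.coe_pow, Module.End.pow_apply, hfun]
    simp_rw [hco]
    rw [toMatrix_krylov, heval z]
    congr 2
    rw [map_add, map_smul, hA, hBm]
  have hf1 : eval 1 f ≠ 0 := by
    rw [hop 1]
    have : T₀ + (1 : ℂ) • (S - T₀) = S := by ext y; simp
    rw [this]
    exact (cyclic_iff_det S x).mp hS
  have hfne : f ≠ 0 := fun h => hf1 (by simp [h])
  have hroots : {z : ℂ | IsRoot f z}.Finite := f.finite_setOf_isRoot hfne
  set ε' : ℝ := ε / (‖S - T₀‖ + 1) with hε'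
  have hpos : 0 < ‖S - T₀‖ + 1 := by positivity
  have hε'pos : 0 < ε' := div_pos hε hpos
  have hinj : Function.Injective (fun n : ℕ => ((ε' / (n + 1) : ℝ) : ℂ)) := by
    intro m n h
    simp only [Complex.ofReal_inj] at h
    have hm : (0:ℝ) < m + 1 := by positivity
    have hn : (0:ℝ) < n + 1 := by positivity
    rw [div_eq_div_iff hm.ne' hn.ne'] at h
    have h2 : ((n : ℝ) + 1) = (m : ℝ) + 1 :=
      mul_left_cancel₀ (ne_of_gt hε'pos) (by linarith)
    exact_mod_cast (by linarith : (m : ℝ) = (n : ℝ))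
  have hzinf : (Set.range (fun n : ℕ => ((ε' / (n + 1) : ℝ) : ℂ))).Infinite :=
    Set.infinite_range_of_injective hinj
  obtain ⟨z, hzr, hznot⟩ := (hzinf.diff hroots).nonempty
  obtain ⟨n, rfl⟩ := hzr
  set z : ℂ := ((ε' / (n + 1) : ℝ) : ℂ) with hz
  refine ⟨T₀ + z • (S - T₀), ?_, ?_⟩
  · rw [Metric.mem_ball, dist_eq_norm]
    rw [add_sub_cancel_left, norm_smul z (S - T₀)]
    have hznorm : ‖z‖ ≤ ε' := by
      rw [hz, Complex.norm_real, Real.norm_eq_abs, abs_of_pos (by positivity)]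
      exact div_le_self hε'pos.le (by push_cast; linarith)
    calc ‖z‖ * ‖S - T₀‖ ≤ ε' * ‖S - T₀‖ :=
          mul_le_mul_of_nonneg_right hznorm (norm_nonneg _)
      _ < ε' * (‖S - T₀‖ + 1) := mul_lt_mul_of_pos_left (lt_add_one _) hε'pos
      _ = ε := by rw [hε']; field_simp
  · show span ℂ (Set.range fun k : ℕ => ((T₀ + z • (S - T₀)) ^ k) x) = ⊤
    rw [cyclic_iff_det]
    rw [← hop z]
    exact fun h0 => hznot h0

/-- The set of operators for which a fixed `x` is cyclic is open. -/
lemma isOpen_cyclic (x : X) :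
    IsOpen {T : X →L[ℂ] X | span ℂ (Set.range fun n : ℕ => (T ^ n) x) = ⊤} := by
  have hset : {T : X →L[ℂ] X | span ℂ (Set.range fun n : ℕ => (T ^ n) x) = ⊤}
      = (fun T : X →L[ℂ] X => ((Module.finBasis ℂ X).toMatrix
          fun i : Fin (finrank ℂ X) => (T ^ (i : ℕ)) x).det) ⁻¹' {(0 : ℂ)}ᶜ := by
    ext T
    simpa using cyclic_iff_det T x
  rw [hset]
  refine IsOpen.preimage ?_ isOpen_compl_singleton
  refine Continuous.matrix_det ?_
  refine continuous_matrix fun i j => ?_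
  simp only [Basis.toMatrix_apply]
  have h1 : Continuous fun T : X →L[ℂ] X => T ^ (j : ℕ) := continuous_pow (j : ℕ)
  have h2 : Continuous fun A : X →L[ℂ] X => A x :=
    (ContinuousLinearMap.apply ℂ X x).continuous
  have h3 : Continuous fun y : X => (Module.finBasis ℂ X).repr y i :=
    (LinearMap.continuous_of_finiteDimensional
      ((Finsupp.lapply i).comp (Module.finBasis ℂ X).repr.toLinearMap))
  exact h3.comp (h2.comp h1)

end Aux

/-- On a finite-dimensional Banach space, given a countable set `E` of nonzero vectors,
the set of operators for which every `x ∈ E` is cyclic is a dense Gδ in the norm topology. -/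
theorem stmt5 {X : Type*} [NormedAddCommGroup X] [NormedSpace ℂ X] [FiniteDimensional ℂ X]
    (E : Set X) (hE : E.Countable) (hE0 : 0 ∉ E) :
    Dense {T : X →L[ℂ] X |
        ∀ x ∈ E, Submodule.span ℂ (Set.range fun n : ℕ => (T ^ n) x) = ⊤} ∧
    IsGδ {T : X →L[ℂ] X |
        ∀ x ∈ E, Submodule.span ℂ (Set.range fun n : ℕ => (T ^ n) x) = ⊤} := by
  have hset : {T : X →L[ℂ] X |
        ∀ x ∈ E, Submodule.span ℂ (Set.range fun n : ℕ => (T ^ n) x) = ⊤}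
      = ⋂ x ∈ E, {T : X →L[ℂ] X |
          Submodule.span ℂ (Set.range fun n : ℕ => (T ^ n) x) = ⊤} := by
    ext T
    simp
  constructor
  · rw [hset]
    exact dense_biInter_of_isOpen (fun x _ => isOpen_cyclic x) hE
      (fun x hx => dense_cyclic x (fun h => hE0 (h ▸ hx)))
  · rw [hset]
    exact IsGδ.biInter_of_isOpen hE (fun x _ => isOpen_cyclic x)
end

section
/- Let H be a separable infinite-dimensional complex Hilbert space and U a unitary operator on H admitting an orthonormal basis (e_i)_{i∈ℕ} of eigenvectors with pairwise distinct eigenvalues. Then U is cyclic, i.e., there exists y ∈ H with span{y, Uy, U²y, …} dense in H. -/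
open scoped InnerProductSpace

section Aux

theorem det_abs_le' {m : ℕ} (M : Matrix (Fin m) (Fin m) ℂ)
    (h : ∀ i j, ‖M i j‖ ≤ 1) :
    ‖M.det‖ ≤ m.factorial := by
  rw [Matrix.det_apply]
  calc ‖∑ σ : Equiv.Perm (Fin m), Equiv.Perm.sign σ • ∏ i, M (σ i) i‖
      ≤ ∑ σ : Equiv.Perm (Fin m), ‖Equiv.Perm.sign σ • ∏ i, M (σ i) i‖ :=
        norm_sum_le _ _
    _ ≤ ∑ _σ : Equiv.Perm (Fin m), (1:ℝ) := by
        apply Finset.sum_le_sum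
        intro σ _
        have h1 : (Equiv.Perm.sign σ) • (∏ i, M (σ i) i)
            = (((Equiv.Perm.sign σ : ℤ)):ℂ) * ∏ i, M (σ i) i := by
          simp [Units.smul_def, zsmul_eq_mul]
        have h2 : ‖(((Equiv.Perm.sign σ : ℤ)):ℂ)‖ = 1 := by
          rcases Int.units_eq_one_or (Equiv.Perm.sign σ) with h' | h' <;> simp [h']
        rw [h1, norm_mul, h2, one_mul, norm_prod]
        exact Finset.prod_le_one (fun i _ => norm_nonneg _) (fun i _ => h _ _)
    _ = (m.factorial : ℝ) := by
        rw [Finset.sum_const, Finset.card_univ, Fintype.card_perm]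
        simp

theorem inv_entry_abs_le' {m : ℕ} (A : Matrix (Fin m) (Fin m) ℂ)
    (h : ∀ i j, ‖A i j‖ ≤ 1) (i j : Fin m) :
    ‖A⁻¹ i j‖ ≤ m.factorial / ‖A.det‖ := by
  rw [Matrix.inv_def, Matrix.smul_apply, Ring.inverse_eq_inv', smul_eq_mul, norm_mul, norm_inv]
  rw [div_eq_inv_mul]
  apply mul_le_mul_of_nonneg_left _ (by positivity)
  rw [Matrix.adjugate_apply]
  apply det_abs_le'
  intro i' j'
  rw [Matrix.updateRow_apply]
  split_ifs with h'
  · rw [Pi.single_apply]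
    split_ifs <;> simp
  · exact h _ _

noncomputable def Vmat (lam : ℕ → ℂ) (N : ℕ) : Matrix (Fin (N+1)) (Fin (N+1)) ℂ :=
  Matrix.vandermonde (fun j : Fin (N+1) => lam (j : ℕ))

noncomputable def dN (lam : ℕ → ℂ) (N : ℕ) : ℝ := ‖(Vmat lam N).det‖

noncomputable def gN (lam : ℕ → ℂ) (N : ℕ) : ℝ := min 1 (dN lam N / (N+2).factorial)

noncomputable def eps (lam : ℕ → ℂ) (j : ℕ) : ℝ :=
  (4:ℝ)⁻¹ ^ j * ∏ N ∈ Finset.range (j+1), gN lam N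

theorem Vmat_det_ne_zero (lam : ℕ → ℂ) (hinj : Function.Injective lam) (N : ℕ) :
    (Vmat lam N).det ≠ 0 := by
  rw [Vmat, Ne, Matrix.det_vandermonde_eq_zero_iff]
  rintro ⟨i, j, hij, hne⟩
  exact hne (Fin.ext (by exact_mod_cast hinj hij))

theorem dN_pos (lam : ℕ → ℂ) (hinj : Function.Injective lam) (N : ℕ) : 0 < dN lam N :=
  norm_pos_iff.mpr (Vmat_det_ne_zero lam hinj N)

theorem gN_pos (lam : ℕ → ℂ) (hinj : Function.Injective lam) (N : ℕ) : 0 < gN lam N := by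
  have := dN_pos lam hinj N
  rw [gN]
  positivity

theorem gN_le_one (lam : ℕ → ℂ) (N : ℕ) : gN lam N ≤ 1 := min_le_left _ _

theorem eps_pos (lam : ℕ → ℂ) (hinj : Function.Injective lam) (j : ℕ) : 0 < eps lam j := by
  rw [eps]
  apply mul_pos (by positivity)
  exact Finset.prod_pos fun N _ => gN_pos lam hinj N

theorem eps_le (lam : ℕ → ℂ) (hinj : Function.Injective lam) (j : ℕ) :
    eps lam j ≤ (4:ℝ)⁻¹ ^ j := by
  rw [eps]
  have h1 : ∏ N ∈ Finset.range (j+1), gN lam N ≤ 1 :=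
    Finset.prod_le_one (fun N _ => (gN_pos lam hinj N).le) (fun N _ => gN_le_one lam N)
  nlinarith [pow_pos (by norm_num : (0:ℝ) < 4⁻¹) j]

theorem eps_le_g (lam : ℕ → ℂ) (hinj : Function.Injective lam) {N j : ℕ} (h : N ≤ j) :
    eps lam j ≤ (4:ℝ)⁻¹ ^ j * gN lam N := by
  rw [eps]
  apply mul_le_mul_of_nonneg_left _ (by positivity)
  have hmem : N ∈ Finset.range (j+1) := Finset.mem_range.mpr (by omega)
  rw [← Finset.mul_prod_erase _ _ hmem]
  calc gN lam N * ∏ M ∈ (Finset.range (j+1)).erase N, gN lam M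
      ≤ gN lam N * 1 := by
        apply mul_le_mul_of_nonneg_left _ (gN_pos lam hinj N).le
        exact Finset.prod_le_one (fun M _ => (gN_pos lam hinj M).le) (fun M _ => gN_le_one lam M)
    _ = gN lam N := mul_one _

theorem eps_memlp (lam : ℕ → ℂ) (hinj : Function.Injective lam) :
    Memℓp (fun j : ℕ => (eps lam j : ℂ)) (2 : ENNReal) := by
  apply memℓp_gen
  have htr : (2 : ENNReal).toReal = 2 := by simp
  rw [htr]
  have h : ∀ j : ℕ, ‖(eps lam j : ℂ)‖ ^ (2:ℝ) ≤ ((16:ℝ)⁻¹) ^ j := by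
    intro j
    rw [Real.rpow_two, Complex.norm_real, Real.norm_eq_abs, abs_of_pos (eps_pos lam hinj j)]
    calc eps lam j ^ 2 ≤ ((4:ℝ)⁻¹ ^ j) ^ 2 := by
          apply pow_le_pow_left₀ (eps_pos lam hinj j).le (eps_le lam hinj j)
      _ = ((16:ℝ)⁻¹) ^ j := by
          rw [← pow_mul, mul_comm, pow_mul]
          norm_num
  refine Summable.of_nonneg_of_le (fun j => ?_) h
    (summable_geometric_of_lt_one (by norm_num) (by norm_num))
  exact Real.rpow_nonneg (norm_nonneg _) _

variable {H : Type*} [NormedAddCommGroup H] [InnerProductSpace ℂ H] [CompleteSpace H]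

theorem coord_of_hasSum (b : HilbertBasis ℕ ℂ H) (a : ℕ → ℂ) (x : H)
    (hx : HasSum (fun i => a i • b i) x) (j : ℕ) : ⟪b j, x⟫_ℂ = a j := by
  have h1 : HasSum (fun i => ⟪b j, a i • b i⟫_ℂ) ⟪b j, x⟫_ℂ :=
    (innerSL ℂ (b j)).hasSum hx
  have h2 : (fun i => ⟪b j, a i • b i⟫_ℂ) = fun i => if i = j then a j else 0 := by
    funext i
    rw [inner_smul_right]
    have := orthonormal_iff_ite.mp b.orthonormal j i
    rw [this]
    by_cases h : i = j
    · simp [h]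
    · rw [if_neg (Ne.symm h), if_neg h, mul_zero]
  rw [h2] at h1
  exact h1.unique (hasSum_ite_eq j (a j))

theorem lam_unimodular (b : HilbertBasis ℕ ℂ H) (U : H →L[ℂ] H)
    (hU : U ∈ unitary (H →L[ℂ] H)) (lam : ℕ → ℂ) (heig : ∀ i, U (b i) = lam i • b i) (i : ℕ) :
    ‖lam i‖ = 1 := by
  have h1 : ‖U (b i)‖ = ‖b i‖ := U.norm_map_of_mem_unitary hU _
  have h2 : ‖b i‖ = 1 := b.orthonormal.1 i
  rw [heig, norm_smul, h2, mul_one] at h1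
  simpa using h1

theorem hasSum_pow_apply (b : HilbertBasis ℕ ℂ H) (U : H →L[ℂ] H)
    (lam : ℕ → ℂ) (heig : ∀ i, U (b i) = lam i • b i)
    (f : ℕ → ℂ) (y : H) (hy : HasSum (fun i => f i • b i) y) (n : ℕ) :
    HasSum (fun i => (f i * lam i ^ n) • b i) ((U ^ n) y) := by
  induction n with
  | zero => simpa using hy
  | succ n ih =>
    have h1 : HasSum (fun i => U ((f i * lam i ^ n) • b i)) (U ((U ^ n) y)) := U.hasSum ih
    have h2 : (fun i => U ((f i * lam i ^ n) • b i)) = fun i => (f i * lam i ^ (n+1)) • b i := by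
      funext i
      rw [map_smul, heig, smul_smul]
      ring_nf
    have h3 : U ((U ^ n) y) = (U ^ (n+1)) y := by
      rw [pow_succ']
      rfl
    rw [h2, h3] at h1
    exact h1

theorem key_approx (b : HilbertBasis ℕ ℂ H) (U : H →L[ℂ] H)
    (hU : U ∈ unitary (H →L[ℂ] H)) (lam : ℕ → ℂ) (heig : ∀ i, U (b i) = lam i • b i)
    (hinj : Function.Injective lam) (y : H)
    (hy : HasSum (fun i => (eps lam i : ℂ) • b i) y) (k N : ℕ) (hkN : k ≤ N) :
    ∃ w ∈ Submodule.span ℂ (Set.range fun n : ℕ => (U ^ n) y),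
      ‖w - b k‖ ≤ Real.sqrt 2 * ((eps lam k)⁻¹ * (2:ℝ)⁻¹ ^ N) := by
  classical
  set A := Vmat lam N with hA
  have hdet : A.det ≠ 0 := Vmat_det_ne_zero lam hinj N
  have habs1 : ∀ i : ℕ, ‖lam i‖ = 1 := lam_unimodular b U hU lam heig
  have hAentry : ∀ i j, ‖A i j‖ ≤ 1 := by
    intro i j
    rw [hA, Vmat, Matrix.vandermonde_apply, norm_pow, habs1, one_pow]
  set k' : Fin (N+1) := ⟨k, by omega⟩ with hk'
  set c : Fin (N+1) → ℂ := A⁻¹.mulVec (Pi.single k' ((eps lam k : ℂ)⁻¹)) with hc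
  have hsolve : A.mulVec c = Pi.single k' ((eps lam k : ℂ)⁻¹) := by
    rw [hc, Matrix.mulVec_mulVec, Matrix.mul_nonsing_inv _ (isUnit_iff_ne_zero.mpr hdet),
      Matrix.one_mulVec]
  have hepsk : ‖(eps lam k : ℂ)⁻¹‖ = (eps lam k)⁻¹ := by
    rw [norm_inv, Complex.norm_real, Real.norm_eq_abs, abs_of_pos (eps_pos lam hinj k)]
  have hcbound : ∀ n, ‖c n‖ ≤ (N+1).factorial / dN lam N * (eps lam k)⁻¹ := by
    intro n
    have h1 : c n = A⁻¹ n k' * (eps lam k : ℂ)⁻¹ := by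
      rw [hc, Matrix.mulVec_single]; rfl
    rw [h1, norm_mul, hepsk]
    apply mul_le_mul_of_nonneg_right _ (inv_nonneg.mpr (eps_pos lam hinj k).le)
    exact inv_entry_abs_le' A hAentry n k'
  set w := ∑ n : Fin (N+1), c n • (U ^ (n:ℕ)) y with hw
  refine ⟨w, ?_, ?_⟩
  · exact Submodule.sum_mem _ fun n _ =>
      Submodule.smul_mem _ _ (Submodule.subset_span ⟨(n:ℕ), rfl⟩)
  -- coordinates of w
  have hUy : ∀ (n j : ℕ), ⟪b j, (U ^ n) y⟫_ℂ = (eps lam j : ℂ) * lam j ^ n := fun n j =>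
    coord_of_hasSum b _ _ (hasSum_pow_apply b U lam heig _ y hy n) j
  have hcoordw : ∀ j : ℕ, b.repr w j
      = (eps lam j : ℂ) * ∑ n : Fin (N+1), c n * lam j ^ (n:ℕ) := by
    intro j
    rw [b.repr_apply_apply, hw, inner_sum, Finset.mul_sum]
    apply Finset.sum_congr rfl
    intro n _
    rw [inner_smul_right, hUy]
    ring
  have hcoord : ∀ j : ℕ, b.repr (w - b k) j
      = (eps lam j : ℂ) * (∑ n : Fin (N+1), c n * lam j ^ (n:ℕ))
        - (if j = k then 1 else 0) := by
    intro j
    rw [map_sub, lp.coeFn_sub, Pi.sub_apply, hcoordw, b.repr_apply_apply,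
      orthonormal_iff_ite.mp b.orthonormal j k]
  have hzero : ∀ j : ℕ, j ≤ N → b.repr (w - b k) j = 0 := by
    intro j hj
    have hjlt : j < N + 1 := by omega
    set j' : Fin (N+1) := ⟨j, hjlt⟩ with hj'
    have hsum : ∑ n : Fin (N+1), c n * lam j ^ (n:ℕ)
        = (Pi.single k' ((eps lam k : ℂ)⁻¹) : Fin (N+1) → ℂ) j' := by
      have h' := congrFun hsolve j'
      simp only [Matrix.mulVec, dotProduct] at h'
      rw [← h']
      apply Finset.sum_congr rfl
      intro n _
      rw [hA, Vmat, Matrix.vandermonde_apply]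
      ring
    rw [hcoord, hsum, Pi.single_apply]
    by_cases hjk : j = k
    · have : j' = k' := Fin.ext (by simpa using hjk)
      rw [if_pos this, if_pos hjk]
      have hne : (eps lam k : ℂ) ≠ 0 := by
        exact_mod_cast (eps_pos lam hinj k).ne'
      subst hjk
      rw [mul_inv_cancel₀ hne, sub_self]
    · have : j' ≠ k' := fun hcon => hjk (by simpa [hj', hk'] using congrArg Fin.val hcon)
      rw [if_neg this, if_neg hjk, mul_zero, sub_zero]
  have hbig : ∀ j : ℕ, ‖b.repr (w - b k) j‖
      ≤ (eps lam k)⁻¹ * (2:ℝ)⁻¹ ^ N * (2:ℝ)⁻¹ ^ j := by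
    intro j
    by_cases hj : j ≤ N
    · rw [hzero j hj, norm_zero]
      have hek := eps_pos lam hinj k
      exact mul_nonneg (mul_nonneg (inv_nonneg.mpr hek.le) (by positivity)) (by positivity)
    · push_neg at hj
      have hNj : N ≤ j := by omega
      rw [hcoord, if_neg (by omega), sub_zero, norm_mul, Complex.norm_real, Real.norm_eq_abs,
        abs_of_pos (eps_pos lam hinj j)]
      have hP : ‖∑ n : Fin (N+1), c n * lam j ^ (n:ℕ)‖
          ≤ (N+2).factorial / dN lam N * (eps lam k)⁻¹ := by
        calc ‖∑ n : Fin (N+1), c n * lam j ^ (n:ℕ)‖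
            ≤ ∑ n : Fin (N+1), ‖c n * lam j ^ (n:ℕ)‖ := norm_sum_le _ _
          _ ≤ ∑ _n : Fin (N+1), (N+1).factorial / dN lam N * (eps lam k)⁻¹ := by
              apply Finset.sum_le_sum
              intro n _
              rw [norm_mul, norm_pow, habs1, one_pow, mul_one]
              exact hcbound n
          _ = (N+1) * ((N+1).factorial / dN lam N * (eps lam k)⁻¹) := by
              rw [Finset.sum_const, Finset.card_univ, Fintype.card_fin, nsmul_eq_mul]
              push_cast
              ring
          _ ≤ (N+2).factorial / dN lam N * (eps lam k)⁻¹ := by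
              have hd := dN_pos lam hinj N
              have he := eps_pos lam hinj k
              have h1 : (0:ℝ) ≤ (eps lam k)⁻¹ := by positivity
              have hfac : ((N:ℝ)+1) * (N+1).factorial ≤ ((N+2).factorial : ℝ) := by
                have h2 : (N+2).factorial = (N+2) * (N+1).factorial := rfl
                rw [h2]
                push_cast
                have : (0:ℝ) ≤ (N+1).factorial := by positivity
                nlinarith
              have h2 : ((N:ℝ)+1) * ((N+1).factorial / dN lam N)
                  ≤ (N+2).factorial / dN lam N := by
                rw [mul_div_assoc']
                exact (div_le_div_iff_of_pos_right hd).mpr hfac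
              calc ((N:ℝ)+1) * ((N+1).factorial / dN lam N * (eps lam k)⁻¹)
                  = ((N:ℝ)+1) * ((N+1).factorial / dN lam N) * (eps lam k)⁻¹ := by ring
                _ ≤ (N+2).factorial / dN lam N * (eps lam k)⁻¹ :=
                    mul_le_mul_of_nonneg_right h2 h1
      have heps : eps lam j ≤ (4:ℝ)⁻¹ ^ j * (dN lam N / (N+2).factorial) :=
        le_trans (eps_le_g lam hinj hNj)
          (mul_le_mul_of_nonneg_left (min_le_right _ _) (by positivity))
      calc eps lam j * ‖∑ n : Fin (N+1), c n * lam j ^ (n:ℕ)‖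
          ≤ ((4:ℝ)⁻¹ ^ j * (dN lam N / (N+2).factorial))
            * ((N+2).factorial / dN lam N * (eps lam k)⁻¹) := by
            apply mul_le_mul heps hP (norm_nonneg _)
              (mul_nonneg (by positivity) (div_nonneg (dN_pos lam hinj N).le (by positivity)))
        _ = (4:ℝ)⁻¹ ^ j * (eps lam k)⁻¹ := by
            have hd := (dN_pos lam hinj N).ne'
            have hf : ((N+2).factorial : ℝ) ≠ 0 := by positivity
            have hek : eps lam k ≠ 0 := (eps_pos lam hinj k).ne'
            field_simp
        _ = (eps lam k)⁻¹ * ((2:ℝ)⁻¹ ^ j * (2:ℝ)⁻¹ ^ j) := by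
            rw [← mul_pow]
            norm_num
            ring
        _ ≤ (eps lam k)⁻¹ * (2:ℝ)⁻¹ ^ N * (2:ℝ)⁻¹ ^ j := by
            rw [mul_assoc]
            apply mul_le_mul_of_nonneg_left _ (inv_nonneg.mpr (eps_pos lam hinj k).le)
            apply mul_le_mul_of_nonneg_right _ (by positivity)
            exact pow_le_pow_of_le_one (by norm_num) (by norm_num) hNj
  -- norm estimate
  set C : ℝ := (eps lam k)⁻¹ * (2:ℝ)⁻¹ ^ N with hC
  have hCpos : 0 < C := by
    have := eps_pos lam hinj k
    rw [hC]
    positivity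
  have hnorm2 : ‖w - b k‖ ^ (2:ℝ) = ∑' j : ℕ, ‖b.repr (w - b k) j‖ ^ (2:ℝ) := by
    rw [← b.repr.norm_map (w - b k)]
    have := lp.norm_rpow_eq_tsum (p := 2) (by norm_num) (b.repr (w - b k))
    simpa using this
  have hsq : ∀ j : ℕ, ‖b.repr (w - b k) j‖ ^ (2:ℝ) ≤ C^2 * ((4:ℝ)⁻¹)^j := by
    intro j
    rw [Real.rpow_two]
    calc ‖b.repr (w - b k) j‖ ^ 2 ≤ (C * (2:ℝ)⁻¹ ^ j) ^ 2 := by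
          apply pow_le_pow_left₀ (norm_nonneg _)
          exact hbig j
      _ = C^2 * ((4:ℝ)⁻¹)^j := by
          rw [mul_pow, ← pow_mul, mul_comm j 2, pow_mul]
          norm_num
  have hsummable : Summable (fun j : ℕ => ‖b.repr (w - b k) j‖ ^ (2:ℝ)) := by
    have := lp.memℓp (b.repr (w - b k))
    rw [memℓp_gen_iff (by norm_num : (0:ℝ) < (2 : ENNReal).toReal)] at this
    simpa using this
  have hsum_le : ∑' j : ℕ, ‖b.repr (w - b k) j‖ ^ (2:ℝ) ≤ C^2 * (4/3 : ℝ) := by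
    have hgsum : ∑' j : ℕ, C^2 * ((4:ℝ)⁻¹)^j = C^2 * (4/3 : ℝ) := by
      rw [tsum_mul_left, tsum_geometric_of_lt_one (by norm_num) (by norm_num)]
      norm_num
    rw [← hgsum]
    apply Summable.tsum_le_tsum hsq hsummable
    exact Summable.mul_left _ (summable_geometric_of_lt_one (by norm_num) (by norm_num))
  have hfinal : ‖w - b k‖ ^ 2 ≤ 2 * C^2 := by
    have h1 : ‖w - b k‖ ^ (2:ℝ) ≤ 2 * C^2 := by
      refine (hnorm2 ▸ hsum_le).trans ?_
      nlinarith [sq_nonneg C]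
    rwa [Real.rpow_two] at h1
  have : ‖w - b k‖ ≤ Real.sqrt (2 * C^2) := by
    rw [← Real.sqrt_sq (norm_nonneg (w - b k))]
    exact Real.sqrt_le_sqrt hfinal
  calc ‖w - b k‖ ≤ Real.sqrt (2 * C^2) := this
    _ = Real.sqrt 2 * C := by
        rw [Real.sqrt_mul (by norm_num), Real.sqrt_sq hCpos.le]
    _ = Real.sqrt 2 * ((eps lam k)⁻¹ * (2:ℝ)⁻¹ ^ N) := by rw [hC]

end Aux

/-- A unitary operator on a separable infinite-dimensional complex Hilbert space admitting an
orthonormal (Hilbert) basis of eigenvectors with pairwise distinct eigenvalues is cyclic. -/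
theorem stmt8 {H : Type*} [NormedAddCommGroup H] [InnerProductSpace ℂ H] [CompleteSpace H]
    (hinf : ¬ FiniteDimensional ℂ H)
    (b : HilbertBasis ℕ ℂ H) (U : H →L[ℂ] H) (hU : U ∈ unitary (H →L[ℂ] H))
    (lam : ℕ → ℂ) (heig : ∀ i, U (b i) = lam i • b i) (hinj : Function.Injective lam) :
    ∃ y : H, Dense
      ((Submodule.span ℂ (Set.range fun n : ℕ => (U ^ n) y) : Submodule ℂ H) : Set H) := by
  classical
  set f : lp (fun _ : ℕ => ℂ) 2 := ⟨fun j => (eps lam j : ℂ), eps_memlp lam hinj⟩ with hf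
  set y : H := b.repr.symm f with hy0
  have hy : HasSum (fun i => (eps lam i : ℂ) • b i) y := by
    have := b.hasSum_repr_symm f
    simpa [hf] using this
  refine ⟨y, ?_⟩
  set S : Submodule ℂ H := Submodule.span ℂ (Set.range fun n : ℕ => (U ^ n) y) with hS
  have hmem : ∀ k : ℕ, b k ∈ closure (S : Set H) := by
    intro k
    rw [Metric.mem_closure_iff]
    intro ε hε
    have htend : Filter.Tendsto (fun N : ℕ => Real.sqrt 2 * ((eps lam k)⁻¹ * (2:ℝ)⁻¹ ^ N))
        Filter.atTop (nhds 0) := by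
      have h1 : Filter.Tendsto (fun N : ℕ => ((2:ℝ)⁻¹) ^ N) Filter.atTop (nhds 0) :=
        tendsto_pow_atTop_nhds_zero_of_lt_one (by norm_num) (by norm_num)
      have := (h1.const_mul (Real.sqrt 2 * (eps lam k)⁻¹))
      simpa [mul_assoc, mul_comm, mul_left_comm] using this
    have hev : ∀ᶠ N : ℕ in Filter.atTop,
        Real.sqrt 2 * ((eps lam k)⁻¹ * (2:ℝ)⁻¹ ^ N) < ε := by
      have := htend.eventually (eventually_lt_nhds hε)
      simpa using this
    obtain ⟨N, hN1, hN2⟩ := (hev.and (Filter.eventually_ge_atTop k)).exists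
    obtain ⟨w, hwS, hwk⟩ := key_approx b U hU lam heig hinj y hy k N hN2
    exact ⟨w, hwS, by
      rw [dist_eq_norm, norm_sub_rev]
      exact lt_of_le_of_lt hwk hN1⟩
  have hle : (Submodule.span ℂ (Set.range b)) ≤ S.topologicalClosure := by
    rw [Submodule.span_le]
    rintro x ⟨k, rfl⟩
    exact hmem k
  have h1 : (Submodule.span ℂ (Set.range ⇑b)).topologicalClosure ≤ S.topologicalClosure :=
    Submodule.topologicalClosure_minimal _ hle S.isClosed_topologicalClosure
  have htop : S.topologicalClosure = ⊤ := top_unique (b.dense_span ▸ h1)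
  rw [← Submodule.dense_iff_topologicalClosure_eq_top] at htop
  exact htop
end
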